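/- For every x ∈ A and a > 0, f(x) ≥ (1 − 2^{−1/p})·a·Σ_{n≥0} 2^{n/p} d(x, π_{a2^{n/p}}(x)), where p > 0. -/

import Mathlib

open MeasureTheory

/-- For every `x ∈ A` and `a > 0`,
`f x ≥ (1 − 2^{−1/p}) · a · Σ_{n≥0} 2^{n/p} dist x (π (a 2^{n/p}))`, where `p > 0`;
under the assumptions that `∫_0^∞ dist x (π t) dt ≤ f x` and `t ↦ dist x (π t)` is
nonincreasing. -/
theorem stmt4 {X : Type*} [MetricSpace X] (f : X → ℝ) (hf : ∀ y, 0 ≤ f y)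
    (A : Set X) (x : X) (hx : x ∈ A) (π : ℝ → X) (p a : ℝ) (hp : 0 < p) (ha : 0 < a)
    (hint : ∫⁻ t in Set.Ioi (0:ℝ), ENNReal.ofReal (dist x (π t)) ≤ ENNReal.ofReal (f x))
    (hmono : ∀ s t : ℝ, 0 ≤ s → s ≤ t → dist x (π t) ≤ dist x (π s)) :
    (1 - 2 ^ (-(1:ℝ) / p)) * a *
      ∑' n : ℕ, 2 ^ ((n : ℝ) / p) * dist x (π (a * 2 ^ ((n : ℝ) / p))) ≤ f x := by
  set c : ℝ := 1 - 2 ^ (-(1:ℝ) / p) with hc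
  have h2pos : (0:ℝ) < 2 ^ (-(1:ℝ)/p) := Real.rpow_pos_of_pos two_pos _
  have h2lt : (2:ℝ) ^ (-(1:ℝ)/p) < 1 :=
    Real.rpow_lt_one_of_one_lt_of_neg one_lt_two (div_neg_of_neg_of_pos (by norm_num) hp)
  have hcpos : 0 < c := by simp [hc]; linarith
  set l : ℕ → ℝ := fun n => a * 2 ^ (((n:ℝ) - 1)/p) with hl
  have hlpos : ∀ n, 0 < l n := fun n => mul_pos ha (Real.rpow_pos_of_pos two_pos _)
  have hlmono : Monotone l := by
    intro m n hmn
    have hmn' : (m:ℝ) ≤ (n:ℝ) := Nat.cast_le.2 hmn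
    show a * 2 ^ (((m:ℝ) - 1)/p) ≤ a * 2 ^ (((n:ℝ) - 1)/p)
    gcongr <;> linarith
  have hdiff : ∀ n : ℕ, l (n+1) - l n = c * a * 2 ^ ((n:ℝ)/p) := by
    intro n
    have e1 : (((n:ℕ)+1:ℕ):ℝ) - 1 = (n:ℝ) := by push_cast; ring
    have e2 : ((n:ℝ) - 1)/p = (n:ℝ)/p + (-(1:ℝ)/p) := by ring
    have e3 : (2:ℝ) ^ (((n:ℝ) - 1)/p) = 2 ^ ((n:ℝ)/p) * 2 ^ (-(1:ℝ)/p) := by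
      rw [e2, Real.rpow_add two_pos]
    simp only [hl, e1, e3, hc]
    ring
  have hd : ∀ n : ℕ, l n ≤ l (n+1) := fun n => hlmono (Nat.le_succ n)
  -- key per-interval bound
  have key : ∀ n : ℕ,
      ENNReal.ofReal (c * a * 2 ^ ((n:ℝ)/p) * dist x (π (l (n+1)))) ≤
        ∫⁻ t in Set.Ioc (l n) (l (n+1)), ENNReal.ofReal (dist x (π t)) := by
    intro n
    have hconst : ∫⁻ t in Set.Ioc (l n) (l (n+1)),
        ENNReal.ofReal (dist x (π (l (n+1)))) =
        ENNReal.ofReal (c * a * 2 ^ ((n:ℝ)/p) * dist x (π (l (n+1)))) := by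
      rw [setLIntegral_const, Real.volume_Ioc, hdiff n,
        ← ENNReal.ofReal_mul (by positivity)]
      ring_nf
    rw [← hconst]
    refine lintegral_mono_ae ((ae_restrict_iff' measurableSet_Ioc).2 (ae_of_all _ fun t ht => ?_))
    exact ENNReal.ofReal_le_ofReal (hmono t (l (n+1)) (le_of_lt (lt_trans (hlpos n) ht.1)) ht.2)
  -- sum over disjoint intervals
  have hdisj : Pairwise (Function.onFun Disjoint fun n : ℕ => Set.Ioc (l n) (l (n+1))) := by
    have := hlmono.pairwise_disjoint_on_Ioc_succ
    simpa [Order.succ_eq_add_one] using this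
  have hsum : ∑' n : ℕ, ∫⁻ t in Set.Ioc (l n) (l (n+1)), ENNReal.ofReal (dist x (π t)) ≤
      ENNReal.ofReal (f x) := by
    rw [← lintegral_iUnion (fun n => measurableSet_Ioc) hdisj]
    refine le_trans (lintegral_mono_set (Set.iUnion_subset fun n t ht => ?_)) hint
    exact lt_trans (hlpos n) ht.1
  have hT : ∑' n : ℕ, ENNReal.ofReal (c * a * 2 ^ ((n:ℝ)/p) * dist x (π (l (n+1)))) ≤
      ENNReal.ofReal (f x) := le_trans (ENNReal.tsum_le_tsum key) hsum
  -- translate to reals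
  have hln1 : ∀ n : ℕ, l (n+1) = a * 2 ^ ((n:ℝ)/p) := by
    intro n
    have e1 : (((n:ℕ)+1:ℕ):ℝ) - 1 = (n:ℝ) := by push_cast; ring
    simp [hl, e1]
  have hterm : ∀ n : ℕ, (0:ℝ) ≤ c * a * 2 ^ ((n:ℝ)/p) * dist x (π (l (n+1)))  := by
    intro n; positivity
  have hfin : ∑' n : ℕ, ENNReal.ofReal (c * a * 2 ^ ((n:ℝ)/p) * dist x (π (l (n+1)))) ≠ ⊤ :=
    ne_top_of_le_ne_top ENNReal.ofReal_ne_top hT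
  have hsummable : Summable (fun n : ℕ => c * a * 2 ^ ((n:ℝ)/p) * dist x (π (l (n+1)))) := by
    have := ENNReal.summable_toReal hfin
    refine this.congr fun n => ?_
    rw [ENNReal.toReal_ofReal (hterm n)]
  have hreal : ∑' n : ℕ, c * a * 2 ^ ((n:ℝ)/p) * dist x (π (l (n+1))) ≤ f x := by
    have h1 : ENNReal.ofReal (∑' n : ℕ, c * a * 2 ^ ((n:ℝ)/p) * dist x (π (l (n+1)))) ≤
        ENNReal.ofReal (f x) := by
      rw [ENNReal.ofReal_tsum_of_nonneg hterm hsummable]; exact hT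
    exact le_trans (ENNReal.ofReal_le_ofReal_iff (hf x) |>.1 h1) le_rfl
  calc c * a * ∑' n : ℕ, 2 ^ ((n:ℝ)/p) * dist x (π (a * 2 ^ ((n:ℝ)/p)))
      = ∑' n : ℕ, c * a * 2 ^ ((n:ℝ)/p) * dist x (π (l (n+1))) := by
        rw [← tsum_mul_left]
        exact tsum_congr fun n => by rw [hln1 n]; ring
    _ ≤ f x := hreal
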